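/- For the best-of-n policy π⁽ⁿ⁾ on a finite set with injective rewards, KL(π⁽ⁿ⁾ ‖ p) ≤ E_{y∼π⁽ⁿ⁾}[ log((1 − (1 − p(y))ⁿ)/p(y)) ]. -/
import Mathlib


open Finset Real

lemma aux_pow_diff (b q : ℝ) (hb : 0 ≤ b) (hq : 0 < q) (h1 : b + q ≤ 1) :
    ∀ n : ℕ, (b + q) ^ n - b ^ n ≤ 1 - (1 - q) ^ n := by
  intro n
  induction n with
  | zero => simp
  | succ n ih =>
    have hb1 : b ≤ 1 - q := by linarith
    have h2 : b ^ n ≤ (1 - q) ^ n := pow_le_pow_left₀ hb hb1 n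
    have h3 : (0:ℝ) ≤ b ^ n := pow_nonneg hb n
    have h4 : (0:ℝ) ≤ (b + q) ^ n := pow_nonneg (by linarith) n
    have h5 : (0:ℝ) ≤ (1 - q) ^ n := pow_nonneg (by linarith) n
    have e1 : (b + q) ^ (n+1) = (b + q) * (b + q) ^ n := by ring
    have e2 : b ^ (n+1) = b * b ^ n := by ring
    have e3 : (1 - q) ^ (n+1) = (1 - q) * (1 - q) ^ n := by ring
    have h6 : (1 - q) ^ n ≤ 1 := pow_le_one₀ (by linarith) (by linarith)
    nlinarith [mul_le_mul_of_nonneg_left ih (by linarith : (0:ℝ) ≤ b + q),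
      mul_le_mul_of_nonneg_right h1 (by linarith : (0:ℝ) ≤ 1 - (1 - q) ^ n),
      mul_le_mul_of_nonneg_left h2 hq.le]

theorem stmt_16
    {Y : Type*} [Fintype Y]
    (p : Y → ℝ) (r : Y → ℝ)
    (hp : ∀ y, 0 < p y) (hsum : ∑ y, p y = 1)
    (hr : Function.Injective r)
    (n : ℕ) (hn : 1 ≤ n)
    (F Fm : Y → ℝ)
    (hF : ∀ y, F y = ∑ z ∈ Finset.univ.filter (fun z => r z ≤ r y), p z)
    (hFm : ∀ y, Fm y = ∑ z ∈ Finset.univ.filter (fun z => r z < r y), p z) :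
    ∑ y : Y, (F y ^ n - Fm y ^ n) * Real.log ((F y ^ n - Fm y ^ n) / p y) ≤
      ∑ y : Y, (F y ^ n - Fm y ^ n) * Real.log ((1 - (1 - p y) ^ n) / p y) := by
  apply Finset.sum_le_sum
  intro y _
  classical
  have hFmnn : 0 ≤ Fm y := by
    rw [hFm]
    exact Finset.sum_nonneg fun z _ => (hp z).le
  have hsplit : F y = Fm y + p y := by
    rw [hF, hFm]
    have hset : Finset.univ.filter (fun z => r z ≤ r y)
        = insert y (Finset.univ.filter (fun z => r z < r y)) := by
      ext z
      simp only [Finset.mem_filter, Finset.mem_univ, true_and, Finset.mem_insert]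
      constructor
      · intro h
        rcases lt_or_eq_of_le h with h' | h'
        · exact Or.inr h'
        · exact Or.inl (hr h')
      · rintro (rfl | h)
        · exact le_refl _
        · exact h.le
    rw [hset, Finset.sum_insert (by simp)]
    ring
  have hF1 : F y ≤ 1 := by
    rw [hF, ← hsum]
    exact Finset.sum_le_sum_of_subset_of_nonneg (Finset.filter_subset _ _)
      (fun z _ _ => (hp z).le)
  have key : F y ^ n - Fm y ^ n ≤ 1 - (1 - p y) ^ n := by
    have := aux_pow_diff (Fm y) (p y) hFmnn (hp y) (by linarith)
    rw [hsplit]; exact this n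
  have hpos : 0 < F y ^ n - Fm y ^ n := by
    have hlt : Fm y ^ n < F y ^ n := by
      apply pow_lt_pow_left₀ (by linarith [hp y, hsplit]) hFmnn
      omega
    linarith
  apply mul_le_mul_of_nonneg_left _ hpos.le
  apply Real.log_le_log (div_pos hpos (hp y))
  gcongr
  exact (hp y).le
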